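/- Let Δ ≥ 0, ε > 0 and b ≥ Δ/ε. For all m, m' ∈ ℝ with |m − m'| ≤ Δ and every measurable set S ⊆ ℝ, ∫_S (1/(2b))·exp(−|x − m|/b) dx ≤ exp(ε) · ∫_S (1/(2b))·exp(−|x − m'|/b) dx. (The Laplace mechanism with scale b ≥ Δq/ε is ε-differentially private.) -/

import Mathlib

open MeasureTheory Real

lemma laplace_int_aux (b : ℝ) (hb : 0 < b) (m : ℝ) :
    Integrable fun x : ℝ => Real.exp (-|x - m| / b) := by
  have key : Integrable fun x : ℝ => Real.exp (-|x| / b) := by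
    have h1 : IntegrableOn (fun x : ℝ => Real.exp (-|x| / b)) (Set.Ioi 0) := by
      refine (exp_neg_integrableOn_Ioi 0 (show (0:ℝ) < 1/b by positivity)).congr_fun
        (fun x hx => ?_) measurableSet_Ioi
      rw [abs_of_pos hx]; ring_nf
    rw [← integrableOn_univ, ← @Set.Iio_union_Ici _ _ (0 : ℝ), integrableOn_union,
      integrableOn_Ici_iff_integrableOn_Ioi]
    refine ⟨?_, h1⟩
    rw [← (Measure.measurePreserving_neg (volume : Measure ℝ)).integrableOn_comp_preimage
        (Homeomorph.neg ℝ).measurableEmbedding]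
    simpa only [Function.comp_def, abs_neg, Set.neg_preimage, Set.neg_Iio, neg_zero] using h1
  simpa using key.comp_sub_right m

/-- The Laplace mechanism with scale `b ≥ Δq/ε` is `ε`-differentially private. -/
theorem laplace_mechanism_dp (Δ ε b : ℝ) (hΔ : 0 ≤ Δ) (hε : 0 < ε) (hb : Δ / ε ≤ b)
    (m m' : ℝ) (hmm : |m - m'| ≤ Δ) (S : Set ℝ) (hS : MeasurableSet S) :
    (∫ x in S, (1 / (2 * b)) * Real.exp (-|x - m| / b)) ≤
      Real.exp ε * ∫ x in S, (1 / (2 * b)) * Real.exp (-|x - m'| / b) := by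
  rcases eq_or_lt_of_le (show (0:ℝ) ≤ b from le_trans (by positivity) hb) with h0 | hbpos
  · simp [← h0]
  have hbΔε : Δ / b ≤ ε := by
    rw [div_le_iff₀ hbpos]
    rw [div_le_iff₀ hε] at hb
    nlinarith
  have hpt : ∀ x : ℝ, (1 / (2 * b)) * Real.exp (-|x - m| / b) ≤
      Real.exp ε * ((1 / (2 * b)) * Real.exp (-|x - m'| / b)) := by
    intro x
    rw [mul_left_comm]
    refine mul_le_mul_of_nonneg_left ?_ (by positivity)
    rw [← Real.exp_add, Real.exp_le_exp]
    have habs : |x - m'| ≤ |x - m| + Δ := by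
      calc |x - m'| = |(x - m) + (m - m')| := by ring_nf
        _ ≤ |x - m| + |m - m'| := abs_add_le _ _
        _ ≤ |x - m| + Δ := by linarith
    have : -|x - m| / b ≤ Δ / b + -|x - m'| / b := by
      rw [← add_div, div_le_div_iff₀ hbpos hbpos]
      nlinarith
    linarith [add_le_add_right hbΔε (-|x - m'| / b)]
  have hI : IntegrableOn (fun x => (1 / (2 * b)) * Real.exp (-|x - m| / b)) S :=
    ((laplace_int_aux b hbpos m).const_mul _).integrableOn
  have hI' : IntegrableOn (fun x => Real.exp ε *
      ((1 / (2 * b)) * Real.exp (-|x - m'| / b))) S :=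
    (((laplace_int_aux b hbpos m').const_mul _).const_mul _).integrableOn
  calc (∫ x in S, (1 / (2 * b)) * Real.exp (-|x - m| / b))
      ≤ ∫ x in S, Real.exp ε * ((1 / (2 * b)) * Real.exp (-|x - m'| / b)) :=
        setIntegral_mono_on hI hI' hS (fun x _ => hpt x)
    _ = Real.exp ε * ∫ x in S, (1 / (2 * b)) * Real.exp (-|x - m'| / b) := by
        rw [integral_const_mul]
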